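/- Combined bound of Theorem 1 (deterministic part): under the hypotheses of Cases (I) and (II), the selected configuration ĉ satisfies L_{k*}(ĉ) ≤ (1+κ) L_avg(c*_{k*}) if L_{k*}(ĉ) ≤ L_avg(ĉ), and L_{k*}(ĉ) ≤ L_worst(c*_{k*}) otherwise. -/
import Mathlib


theorem hypertime_combined_bound {C : Type*} (K : ℕ) (hK : 1 ≤ K) (L : Fin K → C → ℝ)
    (hpos : ∀ k c, 0 ≤ L k c) (kstar : Fin K)
    (Lavg : C → ℝ) (hLavg : ∀ c, Lavg c = (∑ k : Fin K, L k c) / K)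
    (Lworst : C → ℝ)
    (hLworst : ∀ c, Lworst c =
      Finset.univ.sup' ⟨⟨0, hK⟩, Finset.mem_univ _⟩ (fun k => L k c))
    (Lstar : ℝ) (hstar : IsGLB (Set.range Lavg) Lstar) (hstarpos : 0 < Lstar)
    (κ : ℝ) (cstar : C) (hκ : Lavg cstar / Lstar - 1 ≤ κ)
    (Cstar : Set C) (hCstar : Cstar = {c : C | Lavg c ≤ (1 + κ) * Lstar})
    (chat : C) (hchat : chat ∈ Cstar)
    (hmin : ∀ c ∈ Cstar, Lworst chat ≤ Lworst c) :
    (L kstar chat ≤ Lavg chat → L kstar chat ≤ (1 + κ) * Lavg cstar) ∧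
    (¬ (L kstar chat ≤ Lavg chat) → L kstar chat ≤ Lworst cstar) := by
  have hlb : Lstar ≤ Lavg cstar := hstar.1 ⟨cstar, rfl⟩
  have hκ0 : 0 ≤ κ := by
    have : (1 : ℝ) ≤ Lavg cstar / Lstar := (one_le_div hstarpos).mpr hlb
    linarith
  have hcs : Lavg cstar ≤ (1 + κ) * Lstar := by
    have := (div_le_iff₀ hstarpos).mp (by linarith : Lavg cstar / Lstar ≤ 1 + κ)
    linarith
  have hcsmem : cstar ∈ Cstar := by rw [hCstar]; exact hcs
  constructor
  · intro h
    have hchat' : Lavg chat ≤ (1 + κ) * Lstar := by rw [hCstar] at hchat; exact hchat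
    have : (1 + κ) * Lstar ≤ (1 + κ) * Lavg cstar :=
      mul_le_mul_of_nonneg_left hlb (by linarith)
    linarith
  · intro h
    have h1 : L kstar chat ≤ Lworst chat := by
      rw [hLworst]
      exact Finset.le_sup' (fun k => L k chat) (Finset.mem_univ kstar)
    exact h1.trans (hmin cstar hcsmem)
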